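/- Intermediate thresholded CUR perturbation bound (Proposition 8.2): For any τ ≥ 0, writing w = ‖W_{k,I}†‖_F and v = ‖V_{k,J}†‖_F, one has ‖A − C̃ [Ũ]_τ† R̃‖_F ≤ ‖C [Ũ]_τ†‖_F · ‖E_I‖_F + ‖[Ũ]_τ† R̃‖_F · ‖E_J‖_F + w·v·(2‖E_{I,J}‖_F + ‖[Ũ]_τ − U‖_F + ‖[Ũ]_τ†‖_F · ‖E_{I,J}‖_F²). -/

import Mathlib

open Matrix

noncomputable section

variable {𝕂 : Type} [RCLike 𝕂]

/-- The Frobenius norm of a matrix. -/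
noncomputable def frobNorm {m n : ℕ} (M : Matrix (Fin m) (Fin n) 𝕂) : ℝ :=
  Real.sqrt (∑ i, ∑ j, ‖M i j‖ ^ 2)

/-- The `i`-th largest singular value of a matrix (1-indexed), i.e. the `i`-th largest
square root of an eigenvalue of `Mᴴ * M`. -/
noncomputable def sigma {m n : ℕ} (M : Matrix (Fin m) (Fin n) 𝕂) (i : ℕ) : ℝ :=
  ((List.ofFn fun j : Fin n =>
      Real.sqrt ((Matrix.isHermitian_conjTranspose_mul_self M).eigenvalues j)).insertionSort
      (· ≥ ·)).getD (i - 1) 0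

/-- The spectral norm: the largest singular value. -/
noncomputable def specNorm {m n : ℕ} (M : Matrix (Fin m) (Fin n) 𝕂) : ℝ := sigma M 1

/-- `P` is the Moore–Penrose pseudoinverse of `M`: the four Penrose conditions. -/
def IsMPInv {m n : ℕ} (M : Matrix (Fin m) (Fin n) 𝕂) (P : Matrix (Fin n) (Fin m) 𝕂) : Prop :=
  M * P * M = M ∧ P * M * P = P ∧ (M * P)ᴴ = M * P ∧ (P * M)ᴴ = P * M

/-- `Mr` is a truncated SVD of order `r` of `M`, i.e. a best rank-`r` approximation of `M`
(equivalently, a matrix obtained from an SVD of `M` by keeping the `r` largest singular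
values and zeroing out the rest). -/
def IsTruncSVD {m n : ℕ} (M Mr : Matrix (Fin m) (Fin n) 𝕂) (r : ℕ) : Prop :=
  Mr.rank ≤ r ∧ ∀ B : Matrix (Fin m) (Fin n) 𝕂, B.rank ≤ r → frobNorm (M - Mr) ≤ frobNorm (M - B)

/-- `Mt = [M]_τ`: the matrix obtained from an SVD of `M` by setting to zero every singular
value strictly less than `τ` (i.e. keeping exactly the singular values `≥ τ`). -/
def IsThresh {m n : ℕ} (M Mt : Matrix (Fin m) (Fin n) 𝕂) (τ : ℝ) : Prop :=
  IsTruncSVD M Mt (Nat.card {i : Fin (min m n) // τ ≤ sigma M ((i : ℕ) + 1)})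

/-- The volume of a matrix: the product of its `min p q` largest singular values. -/
noncomputable def vol {p q : ℕ} (M : Matrix (Fin p) (Fin q) 𝕂) : ℝ :=
  ∏ i ∈ Finset.range (min p q), sigma M (i + 1)

end

section CURHelpers

open Matrix RCLike

attribute [local instance] Matrix.frobeniusSeminormedAddCommGroup

variable {𝕂 : Type} [RCLike 𝕂]

private lemma frobNorm_eq_norm {a b : ℕ} (M : Matrix (Fin a) (Fin b) 𝕂) : frobNorm M = ‖M‖ := by
  rw [Matrix.frobenius_norm_def, frobNorm, Real.sqrt_eq_rpow]
  congr 1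
  apply Finset.sum_congr rfl; intro i _
  apply Finset.sum_congr rfl; intro j _
  rw [← Real.rpow_natCast]
  norm_num

private lemma frob_sq {a b : ℕ} (M : Matrix (Fin a) (Fin b) 𝕂) :
    ‖M‖ ^ 2 = ∑ i, ∑ j, ‖M i j‖ ^ 2 := by
  rw [← frobNorm_eq_norm, frobNorm, Real.sq_sqrt]
  positivity

private lemma trace_form {a b : ℕ} (X Y : Matrix (Fin a) (Fin b) 𝕂) :
    (Xᴴ * Y).trace = ∑ i, ∑ j, (starRingEnd 𝕂) (X i j) * Y i j := by
  simp only [Matrix.trace, Matrix.diag, Matrix.mul_apply, Matrix.conjTranspose_apply,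
    starRingEnd_apply]
  rw [Finset.sum_comm]

private lemma re_trace_self {a b : ℕ} (Z : Matrix (Fin a) (Fin b) 𝕂) :
    RCLike.re ((Zᴴ * Z).trace) = ∑ i, ∑ j, ‖Z i j‖ ^ 2 := by
  rw [trace_form]
  simp_rw [RCLike.conj_mul]
  norm_cast

private lemma norm_sq_eq_re_trace {a b : ℕ} (M : Matrix (Fin a) (Fin b) 𝕂) :
    ‖M‖ ^ 2 = RCLike.re ((Mᴴ * M).trace) := by
  rw [re_trace_self, frob_sq]

private lemma eq_zero_of_trace_self {a b : ℕ} (Z : Matrix (Fin a) (Fin b) 𝕂)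
    (h : (Zᴴ * Z).trace = 0) : Z = 0 := by
  have h2 : ∑ i, ∑ j, ‖Z i j‖ ^ 2 = 0 := by rw [← re_trace_self, h, map_zero]
  ext i j
  have hnn : ∀ i ∈ Finset.univ, (0:ℝ) ≤ ∑ j, ‖Z i j‖ ^ 2 := by intros; positivity
  have h3 := (Finset.sum_eq_zero_iff_of_nonneg hnn).mp h2 i (Finset.mem_univ i)
  have hnn2 : ∀ j ∈ Finset.univ, (0:ℝ) ≤ ‖Z i j‖ ^ 2 := by intros; positivity
  have h4 := (Finset.sum_eq_zero_iff_of_nonneg hnn2).mp h3 j (Finset.mem_univ j)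
  simpa using h4

private lemma norm_unitary_left {a b c : ℕ} (W : Matrix (Fin a) (Fin b) 𝕂) (hW : Wᴴ * W = 1)
    (X : Matrix (Fin b) (Fin c) 𝕂) : ‖W * X‖ = ‖X‖ := by
  have h : (W * X)ᴴ * (W * X) = Xᴴ * X := by
    rw [Matrix.conjTranspose_mul, Matrix.mul_assoc, ← Matrix.mul_assoc Wᴴ W X, hW,
      Matrix.one_mul]
  have h2 : ‖W * X‖ ^ 2 = ‖X‖ ^ 2 := by rw [norm_sq_eq_re_trace, norm_sq_eq_re_trace, h]
  calc ‖W * X‖ = Real.sqrt (‖W * X‖ ^ 2) := (Real.sqrt_sq (norm_nonneg _)).symm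
    _ = Real.sqrt (‖X‖ ^ 2) := by rw [h2]
    _ = ‖X‖ := Real.sqrt_sq (norm_nonneg _)

private lemma norm_unitary_right {a b c : ℕ} (V : Matrix (Fin a) (Fin b) 𝕂) (hV : Vᴴ * V = 1)
    (X : Matrix (Fin c) (Fin b) 𝕂) : ‖X * Vᴴ‖ = ‖X‖ := by
  rw [← Matrix.frobenius_norm_conjTranspose (X * Vᴴ), Matrix.conjTranspose_mul,
    Matrix.conjTranspose_conjTranspose, norm_unitary_left V hV,
    Matrix.frobenius_norm_conjTranspose]

private lemma norm_proj_left {a c : ℕ} (Q : Matrix (Fin a) (Fin a) 𝕂) (hH : Qᴴ = Q)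
    (hI : Q * Q = Q) (X : Matrix (Fin a) (Fin c) 𝕂) : ‖Q * X‖ ≤ ‖X‖ := by
  have e1 : (Q * X)ᴴ * (Q * X) = Xᴴ * (Q * X) := by
    rw [Matrix.conjTranspose_mul, hH, Matrix.mul_assoc, ← Matrix.mul_assoc Q Q X, hI]
  have e1' : (Q * X)ᴴ * X = Xᴴ * (Q * X) := by
    rw [Matrix.conjTranspose_mul, hH, Matrix.mul_assoc]
  have e2 : (X - Q * X)ᴴ * (X - Q * X) = Xᴴ * X - Xᴴ * (Q * X) := by
    rw [Matrix.conjTranspose_sub, Matrix.sub_mul, Matrix.mul_sub, Matrix.mul_sub, e1, e1']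
    abel
  have key : ‖X‖ ^ 2 = ‖Q * X‖ ^ 2 + ‖X - Q * X‖ ^ 2 := by
    rw [norm_sq_eq_re_trace, norm_sq_eq_re_trace, norm_sq_eq_re_trace, e1, e2, ← map_add,
      ← Matrix.trace_add]
    congr 2
    abel
  nlinarith [norm_nonneg (Q * X), norm_nonneg X, sq_nonneg ‖X - Q * X‖]

private lemma norm_proj_right {a c : ℕ} (Q : Matrix (Fin a) (Fin a) 𝕂) (hH : Qᴴ = Q)
    (hI : Q * Q = Q) (X : Matrix (Fin c) (Fin a) 𝕂) : ‖X * Q‖ ≤ ‖X‖ := by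
  rw [← Matrix.frobenius_norm_conjTranspose (X * Q), ← Matrix.frobenius_norm_conjTranspose X,
    Matrix.conjTranspose_mul, hH]
  exact norm_proj_left Q hH hI Xᴴ

open scoped ComplexOrder in
private lemma rank_conjT {a b : ℕ} (M : Matrix (Fin a) (Fin b) 𝕂) : (Mᴴ).rank = M.rank :=
  Matrix.rank_conjTranspose M

private lemma inner_eq_zero_of_min {E : Type} [NormedAddCommGroup E] [InnerProductSpace 𝕂 E]
    (v w : E) (h : ∀ t : 𝕂, ‖v‖ ≤ ‖v - t • w‖) : (inner 𝕂 w v : 𝕂) = 0 := by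
  by_contra hne
  set S : 𝕂 := inner 𝕂 w v with hSdef
  set s : ℝ := 1 / (‖w‖ ^ 2 + 1) with hs
  have hspos : 0 < s := by positivity
  have hsw : s * (‖w‖ ^ 2 + 1) = 1 := by
    rw [hs]; field_simp
  have h2 := h ((s : 𝕂) * S)
  have hsq : ‖v‖ ^ 2 ≤ ‖v - ((s : 𝕂) * S) • w‖ ^ 2 :=
    pow_le_pow_left₀ (norm_nonneg v) h2 2
  rw [@norm_sub_sq 𝕂] at hsq
  have hvw : (inner 𝕂 v w : 𝕂) = starRingEnd 𝕂 S := by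
    rw [hSdef, ← inner_conj_symm]
  have hinner : RCLike.re (inner 𝕂 v (((s : 𝕂) * S) • w) : 𝕂) = s * ‖S‖ ^ 2 := by
    rw [inner_smul_right, hvw, mul_assoc, RCLike.mul_conj]
    rw [← RCLike.ofReal_pow, ← RCLike.ofReal_mul, RCLike.ofReal_re]
  have hnrm : ‖((s : 𝕂) * S) • w‖ ^ 2 = s ^ 2 * ‖S‖ ^ 2 * ‖w‖ ^ 2 := by
    rw [norm_smul, norm_mul, RCLike.norm_ofReal, abs_of_pos hspos]
    ring
  have hS2 : 0 < ‖S‖ ^ 2 := by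
    have := norm_pos_iff.mpr hne
    positivity
  rw [hinner, hnrm] at hsq
  nlinarith [mul_pos hspos hS2, sq_nonneg s, sq_nonneg ‖w‖]

private noncomputable def mvec {a b : ℕ} (M : Matrix (Fin a) (Fin b) 𝕂) :
    EuclideanSpace 𝕂 (Fin a × Fin b) := WithLp.toLp 2 (fun x : Fin a × Fin b => M x.1 x.2)

private lemma mvec_norm {a b : ℕ} (M : Matrix (Fin a) (Fin b) 𝕂) : ‖mvec M‖ = ‖M‖ := by
  rw [EuclideanSpace.norm_eq]
  have h : ∑ x : Fin a × Fin b, ‖mvec M x‖ ^ 2 = ∑ i, ∑ j, ‖M i j‖ ^ 2 := by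
    rw [Fintype.sum_prod_type]; rfl
  rw [h, ← frob_sq, Real.sqrt_sq (norm_nonneg M)]

private lemma mvec_inner {a b : ℕ} (X Y : Matrix (Fin a) (Fin b) 𝕂) :
    (inner 𝕂 (mvec X) (mvec Y) : 𝕂) = (Xᴴ * Y).trace := by
  rw [trace_form, PiLp.inner_apply, Fintype.sum_prod_type]
  simp [mvec, RCLike.inner_apply, mul_comm]

private lemma rank_left_cancel {a b c : ℕ} (M : Matrix (Fin a) (Fin b) 𝕂) (h : M.rank = b)
    (N : Matrix (Fin b) (Fin c) 𝕂) (hMN : M * N = 0) : N = 0 := by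
  have h' : Module.finrank 𝕂 (LinearMap.range M.mulVecLin) = b := h
  have hrk := LinearMap.finrank_range_add_finrank_ker M.mulVecLin
  rw [Module.finrank_fintype_fun_eq_card, Fintype.card_fin, h'] at hrk
  have hker0 : Module.finrank 𝕂 (LinearMap.ker M.mulVecLin) = 0 := by omega
  have hker : LinearMap.ker M.mulVecLin = ⊥ := Submodule.finrank_eq_zero.mp hker0
  have hinj := LinearMap.ker_eq_bot.mp hker
  ext i j
  have hcol : M.mulVecLin (fun l => N l j) = M.mulVecLin 0 := by
    funext a
    simp only [Matrix.mulVecLin_apply, Matrix.mulVec_zero]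
    have := congrFun (congrFun hMN a) j
    simpa [Matrix.mulVec, dotProduct, Matrix.mul_apply] using this
  have hz := hinj hcol
  have := congrFun hz i
  simpa using this

private lemma trunc_orth {a b : ℕ} {r : ℕ} (M Mr : Matrix (Fin a) (Fin b) 𝕂)
    (h : IsTruncSVD M Mr r) :
    (M - Mr) * Mrᴴ = 0 ∧ Mrᴴ * (M - Mr) = 0 := by
  set D := M - Mr with hD
  have key : ∀ X : Matrix (Fin a) (Fin b) 𝕂,
      (∀ t : 𝕂, (Mr + t • X).rank ≤ r) → (Xᴴ * D).trace = 0 := by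
    intro X hX
    have hmin : ∀ t : 𝕂, ‖mvec D‖ ≤ ‖mvec D - t • mvec X‖ := by
      intro t
      have h2 := h.2 (Mr + t • X) (hX t)
      rw [frobNorm_eq_norm, frobNorm_eq_norm] at h2
      have hMB : M - (Mr + t • X) = D - t • X := by rw [hD]; abel
      rw [hMB] at h2
      have hv : mvec (D - t • X) = mvec D - t • mvec X := rfl
      rwa [mvec_norm, ← hv, mvec_norm]
    have hz := inner_eq_zero_of_min (mvec D) (mvec X) hmin
    rw [mvec_inner] at hz
    exact hz
  constructor
  · have h1 := key ((D * Mrᴴ) * Mr) ?_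
    · have htr : (((D * Mrᴴ) * Mr)ᴴ * D).trace = ((D * Mrᴴ)ᴴ * (D * Mrᴴ)).trace := by
        rw [Matrix.conjTranspose_mul, Matrix.mul_assoc, Matrix.trace_mul_comm,
          Matrix.mul_assoc]
      rw [htr] at h1
      exact eq_zero_of_trace_self _ h1
    · intro t
      have he : Mr + t • ((D * Mrᴴ) * Mr) = (1 + t • (D * Mrᴴ)) * Mr := by
        rw [Matrix.add_mul, Matrix.one_mul, Matrix.smul_mul]
      rw [he]
      exact le_trans (Matrix.rank_mul_le_right _ _) h.1
  · have h1 := key (Mr * (Mrᴴ * D)) ?_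
    · have htr : ((Mr * (Mrᴴ * D))ᴴ * D).trace = ((Mrᴴ * D)ᴴ * (Mrᴴ * D)).trace := by
        rw [Matrix.conjTranspose_mul, Matrix.mul_assoc]
      rw [htr] at h1
      exact eq_zero_of_trace_self _ h1
    · intro t
      have he : Mr + t • (Mr * (Mrᴴ * D)) = Mr * (1 + t • (Mrᴴ * D)) := by
        rw [Matrix.mul_add, Matrix.mul_one, Matrix.mul_smul]
      rw [he]
      exact le_trans (Matrix.rank_mul_le_left _ _) h.1

end CURHelpers

section CURMain

open Matrix RCLike

attribute [local instance] Matrix.frobeniusSeminormedAddCommGroup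

set_option maxHeartbeats 1000000 in
/-- Proposition 8.2: intermediate thresholded CUR perturbation bound. -/
theorem thresholded_cur_intermediate {𝕂 : Type} [RCLike 𝕂] {m n k p q : ℕ}
    (A E : Matrix (Fin m) (Fin n) 𝕂)
    (hrankA : A.rank = k)
    (ι : Fin p ↪ Fin m) (κ : Fin q ↪ Fin n)
    (hrankC : (A.submatrix id ⇑κ).rank = k)
    (hrankU : (A.submatrix ⇑ι ⇑κ).rank = k)
    (hrankR : (A.submatrix ⇑ι id).rank = k)
    (W : Matrix (Fin m) (Fin k) 𝕂) (V : Matrix (Fin n) (Fin k) 𝕂) (d : Fin k → ℝ)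
    (hW : Wᴴ * W = 1) (hV : Vᴴ * V = 1)
    (hmono : ∀ i j : Fin k, i ≤ j → d j ≤ d i) (hpos : ∀ i, 0 < d i)
    (hSVD : A = W * Matrix.diagonal (fun i => (d i : 𝕂)) * Vᴴ)
    (Wp : Matrix (Fin k) (Fin p) 𝕂) (hWp : IsMPInv (W.submatrix ⇑ι id) Wp)
    (Vp : Matrix (Fin k) (Fin q) 𝕂) (hVp : IsMPInv (V.submatrix ⇑κ id) Vp)
    (τ : ℝ) (hτ : 0 ≤ τ)
    (Ut : Matrix (Fin p) (Fin q) 𝕂) (hUt : IsThresh ((A + E).submatrix ⇑ι ⇑κ) Ut τ)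
    (Utp : Matrix (Fin q) (Fin p) 𝕂) (hUtp : IsMPInv Ut Utp) :
    frobNorm (A - (A + E).submatrix id ⇑κ * Utp * (A + E).submatrix ⇑ι id) ≤
      frobNorm (A.submatrix id ⇑κ * Utp) * frobNorm (E.submatrix ⇑ι id) +
        frobNorm (Utp * (A + E).submatrix ⇑ι id) * frobNorm (E.submatrix id ⇑κ) +
        frobNorm Wp * frobNorm Vp *
          (2 * frobNorm (E.submatrix ⇑ι ⇑κ) + frobNorm (Ut - A.submatrix ⇑ι ⇑κ) +
            frobNorm Utp * frobNorm (E.submatrix ⇑ι ⇑κ) ^ 2) := by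
  classical
  obtain ⟨ho1, ho2⟩ := trunc_orth ((A + E).submatrix ⇑ι ⇑κ) Ut hUt
  set Dg : Matrix (Fin k) (Fin k) 𝕂 := Matrix.diagonal (fun i => (d i : 𝕂)) with hDg
  set WI := W.submatrix ⇑ι id with hWI
  set VJ := V.submatrix ⇑κ id with hVJ
  set C := A.submatrix id ⇑κ with hCdef
  set Rm := A.submatrix ⇑ι id with hRdef
  set U := A.submatrix ⇑ι ⇑κ with hUdef
  set E0 := E.submatrix ⇑ι ⇑κ with hE0
  set E1 := E.submatrix ⇑ι id with hE1
  set E2 := E.submatrix id ⇑κ with hE2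
  set P := Utp with hPdef
  -- submatrix sums
  have hCs : (A + E).submatrix id ⇑κ = C + E2 := by
    rw [hCdef, hE2]; ext i j; simp [Matrix.submatrix_apply]
  have hRs : (A + E).submatrix ⇑ι id = Rm + E1 := by
    rw [hRdef, hE1]; ext i j; simp [Matrix.submatrix_apply]
  have hUs : (A + E).submatrix ⇑ι ⇑κ = U + E0 := by
    rw [hUdef, hE0]; ext i j; simp [Matrix.submatrix_apply]
  rw [hUs] at ho1 ho2
  -- SVD pieces
  have hU : U = WI * Dg * VJᴴ := by
    rw [hUdef, hSVD, Matrix.submatrix_mul (W * Dg) Vᴴ ⇑ι id ⇑κ Function.bijective_id,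
      Matrix.submatrix_mul W Dg ⇑ι id id Function.bijective_id, Matrix.submatrix_id_id,
      Matrix.conjTranspose_submatrix]
  have hC : C = W * Dg * VJᴴ := by
    rw [hCdef, hSVD, Matrix.submatrix_mul (W * Dg) Vᴴ id id ⇑κ Function.bijective_id,
      Matrix.submatrix_id_id, Matrix.conjTranspose_submatrix]
  have hR : Rm = WI * Dg * Vᴴ := by
    rw [hRdef, hSVD, Matrix.submatrix_mul (W * Dg) Vᴴ ⇑ι id id Function.bijective_id,
      Matrix.submatrix_mul W Dg ⇑ι id id Function.bijective_id, Matrix.submatrix_id_id,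
      Matrix.submatrix_id_id]
  -- full column rank of the sampled factors
  have hWIrank : WI.rank = k := by
    refine le_antisymm ?_ ?_
    · simpa using Matrix.rank_le_card_width WI
    · have h1 : Rm = WI * (Dg * Vᴴ) := by rw [hR, Matrix.mul_assoc]
      calc k = Rm.rank := hrankR.symm
        _ ≤ WI.rank := by rw [h1]; exact Matrix.rank_mul_le_left _ _
  have hVJrank : VJ.rank = k := by
    refine le_antisymm ?_ ?_
    · simpa using Matrix.rank_le_card_width VJ
    · calc k = C.rank := hrankC.symm
        _ ≤ (VJᴴ).rank := by rw [hC]; exact Matrix.rank_mul_le_right _ _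
        _ = VJ.rank := rank_conjT _
  have hWpWI : Wp * WI = 1 := by
    have h0 : WI * (Wp * WI - 1) = 0 := by
      rw [Matrix.mul_sub, Matrix.mul_one, ← Matrix.mul_assoc, hWp.1, sub_self]
    exact sub_eq_zero.mp (rank_left_cancel WI hWIrank _ h0)
  have hVpVJ : Vp * VJ = 1 := by
    have h0 : VJ * (Vp * VJ - 1) = 0 := by
      rw [Matrix.mul_sub, Matrix.mul_one, ← Matrix.mul_assoc, hVp.1, sub_self]
    exact sub_eq_zero.mp (rank_left_cancel VJ hVJrank _ h0)
  -- pseudoinverse annihilation of the thresholded residual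
  have hP1 : P = P * Pᴴ * Utᴴ := by
    calc P = P * Ut * P := (hUtp.2.1).symm
      _ = P * (Ut * P) := by rw [Matrix.mul_assoc]
      _ = P * (Ut * P)ᴴ := by rw [hUtp.2.2.1]
      _ = P * (Pᴴ * Utᴴ) := by rw [Matrix.conjTranspose_mul]
      _ = P * Pᴴ * Utᴴ := by rw [Matrix.mul_assoc]
  have hP2 : P = Utᴴ * Pᴴ * P := by
    calc P = P * Ut * P := (hUtp.2.1).symm
      _ = (P * Ut)ᴴ * P := by rw [hUtp.2.2.2]
      _ = Utᴴ * Pᴴ * P := by rw [Matrix.conjTranspose_mul]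
  have hPD : P * (U + E0 - Ut) = 0 := by
    calc P * (U + E0 - Ut) = P * Pᴴ * Utᴴ * (U + E0 - Ut) := by rw [← hP1]
      _ = P * Pᴴ * (Utᴴ * (U + E0 - Ut)) := by rw [Matrix.mul_assoc]
      _ = 0 := by rw [ho2, Matrix.mul_zero]
  have hDP : (U + E0 - Ut) * P = 0 := by
    calc (U + E0 - Ut) * P = (U + E0 - Ut) * (Utᴴ * Pᴴ * P) := by rw [← hP2]
      _ = (U + E0 - Ut) * Utᴴ * Pᴴ * P := by
          rw [← Matrix.mul_assoc, ← Matrix.mul_assoc]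
      _ = 0 := by rw [ho1, Matrix.zero_mul, Matrix.zero_mul]
  have hPUs : P * (U + E0) = P * Ut := by
    rw [Matrix.mul_sub] at hPD
    exact sub_eq_zero.mp hPD
  have hUsP : (U + E0) * P = Ut * P := by
    rw [Matrix.sub_mul] at hDP
    exact sub_eq_zero.mp hDP
  -- key algebraic identity for U * P * U
  have hUP : U * P = Ut * P - E0 * P := by
    rw [Matrix.add_mul] at hUsP
    exact eq_sub_of_add_eq hUsP
  have hPU : P * U = P * Ut - P * E0 := by
    rw [Matrix.mul_add] at hPUs
    exact eq_sub_of_add_eq hPUs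
  have p3 : U * P * U = Ut - Ut * P * E0 - E0 * P * Ut + E0 * P * E0 := by
    calc U * P * U = (Ut * P - E0 * P) * U := by rw [hUP]
      _ = Ut * (P * U) - E0 * (P * U) := by
          rw [Matrix.sub_mul, Matrix.mul_assoc, Matrix.mul_assoc]
      _ = Ut * (P * Ut - P * E0) - E0 * (P * Ut - P * E0) := by rw [hPU]
      _ = Ut * P * Ut - Ut * (P * E0) - (E0 * (P * Ut) - E0 * (P * E0)) := by
          rw [Matrix.mul_sub, Matrix.mul_sub, ← Matrix.mul_assoc Ut P Ut]
      _ = Ut - Ut * P * E0 - E0 * P * Ut + E0 * P * E0 := by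
          rw [hUtp.1, ← Matrix.mul_assoc Ut P E0, ← Matrix.mul_assoc E0 P Ut,
            ← Matrix.mul_assoc E0 P E0]
          abel
  -- reconstruction identities
  have hWpU : Wp * U = Dg * VJᴴ := by
    rw [hU, ← Matrix.mul_assoc, ← Matrix.mul_assoc, hWpWI, Matrix.one_mul]
  have hUVp : U * Vpᴴ = WI * Dg := by
    rw [hU, Matrix.mul_assoc, ← Matrix.conjTranspose_mul, hVpVJ, Matrix.conjTranspose_one,
      Matrix.mul_one]
  have p1 : W * (Wp * U * Vpᴴ) * Vᴴ = A := by
    rw [hWpU, Matrix.mul_assoc Dg VJᴴ Vpᴴ, ← Matrix.conjTranspose_mul, hVpVJ,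
      Matrix.conjTranspose_one, Matrix.mul_one, ← hSVD]
  have p2 : W * (Wp * (U * P * U) * Vpᴴ) * Vᴴ = C * P * Rm := by
    have e1 : Wp * (U * P * U) * Vpᴴ = Dg * VJᴴ * P * (WI * Dg) := by
      rw [show U * P * U = U * (P * U) from Matrix.mul_assoc U P U,
        ← Matrix.mul_assoc Wp U (P * U), hWpU,
        Matrix.mul_assoc (Dg * VJᴴ) (P * U) Vpᴴ,
        Matrix.mul_assoc P U Vpᴴ, hUVp, ← Matrix.mul_assoc (Dg * VJᴴ) P (WI * Dg)]
    rw [e1, hC, hR, ← Matrix.mul_assoc W (Dg * VJᴴ * P) (WI * Dg),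
      ← Matrix.mul_assoc W (Dg * VJᴴ) P, ← Matrix.mul_assoc W Dg VJᴴ,
      Matrix.mul_assoc (W * Dg * VJᴴ * P) (WI * Dg) Vᴴ]
  -- the main decomposition
  set Y := U - Ut + Ut * P * E0 + E0 * P * Ut - E0 * P * E0 with hYdef
  have hY : Y = U - U * P * U := by rw [hYdef, p3]; abel
  have hACPR : A - C * P * Rm = W * (Wp * Y * Vpᴴ) * Vᴴ := by
    have hdist : W * (Wp * Y * Vpᴴ) * Vᴴ
        = W * (Wp * U * Vpᴴ) * Vᴴ - W * (Wp * (U * P * U) * Vpᴴ) * Vᴴ := by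
      rw [hY, Matrix.mul_sub Wp, Matrix.sub_mul, Matrix.mul_sub W, Matrix.sub_mul]
    rw [hdist, p1, p2]
  have hmain : A - (C + E2) * P * (Rm + E1)
      = W * (Wp * Y * Vpᴴ) * Vᴴ - C * P * E1 - E2 * (P * (Rm + E1)) := by
    rw [← hACPR, Matrix.add_mul C E2 P, Matrix.add_mul (C * P) (E2 * P) (Rm + E1),
      Matrix.mul_add (C * P) Rm E1, Matrix.mul_assoc E2 P (Rm + E1)]
    abel
  -- norm estimates
  have hQ1I : (Ut * P) * (Ut * P) = Ut * P := by rw [← Matrix.mul_assoc, hUtp.1]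
  have hQ2I : (P * Ut) * (P * Ut) = P * Ut := by rw [← Matrix.mul_assoc, hUtp.2.1]
  simp only [frobNorm_eq_norm]
  rw [hCs, hRs]
  have hb0 : ‖A - (C + E2) * P * (Rm + E1)‖
      ≤ ‖W * (Wp * Y * Vpᴴ) * Vᴴ‖ + ‖C * P * E1‖ + ‖E2 * (P * (Rm + E1))‖ := by
    rw [hmain]
    have t1 := norm_sub_le (W * (Wp * Y * Vpᴴ) * Vᴴ - C * P * E1) (E2 * (P * (Rm + E1)))
    have t2 := norm_sub_le (W * (Wp * Y * Vpᴴ) * Vᴴ) (C * P * E1)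
    linarith
  have hb1 : ‖W * (Wp * Y * Vpᴴ) * Vᴴ‖ = ‖Wp * Y * Vpᴴ‖ := by
    rw [norm_unitary_right V hV, norm_unitary_left W hW]
  have hb2 : ‖Wp * Y * Vpᴴ‖ ≤ ‖Wp‖ * ‖Vp‖ * ‖Y‖ := by
    have h1 : ‖Wp * Y * Vpᴴ‖ ≤ ‖Wp * Y‖ * ‖Vpᴴ‖ := Matrix.frobenius_norm_mul _ _
    have h2 : ‖Wp * Y‖ ≤ ‖Wp‖ * ‖Y‖ := Matrix.frobenius_norm_mul _ _
    have h3 : ‖Vpᴴ‖ = ‖Vp‖ := Matrix.frobenius_norm_conjTranspose _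
    have h4 : ‖Wp * Y‖ * ‖Vpᴴ‖ ≤ ‖Wp‖ * ‖Y‖ * ‖Vpᴴ‖ :=
      mul_le_mul_of_nonneg_right h2 (norm_nonneg _)
    rw [h3] at h1 h4
    have h6 : ‖Wp‖ * ‖Y‖ * ‖Vp‖ = ‖Wp‖ * ‖Vp‖ * ‖Y‖ := by ring
    linarith
  have hc2 : ‖Ut * P * E0‖ ≤ ‖E0‖ := norm_proj_left (Ut * P) hUtp.2.2.1 hQ1I E0
  have hc3 : ‖E0 * P * Ut‖ ≤ ‖E0‖ := by
    rw [Matrix.mul_assoc]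
    exact norm_proj_right (P * Ut) hUtp.2.2.2 hQ2I E0
  have hc4 : ‖E0 * P * E0‖ ≤ ‖P‖ * ‖E0‖ ^ 2 := by
    have h1 : ‖E0 * P * E0‖ ≤ ‖E0 * P‖ * ‖E0‖ := Matrix.frobenius_norm_mul _ _
    have h2 : ‖E0 * P‖ ≤ ‖E0‖ * ‖P‖ := Matrix.frobenius_norm_mul _ _
    have h4 : ‖E0 * P‖ * ‖E0‖ ≤ ‖E0‖ * ‖P‖ * ‖E0‖ :=
      mul_le_mul_of_nonneg_right h2 (norm_nonneg _)
    have h6 : ‖E0‖ * ‖P‖ * ‖E0‖ = ‖P‖ * ‖E0‖ ^ 2 := by ring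
    linarith
  have hbY : ‖Y‖ ≤ 2 * ‖E0‖ + ‖Ut - U‖ + ‖P‖ * ‖E0‖ ^ 2 := by
    have hs1 : ‖Y‖ ≤ ‖U - Ut + Ut * P * E0 + E0 * P * Ut‖ + ‖E0 * P * E0‖ := by
      rw [hYdef]; exact norm_sub_le _ _
    have hs2 : ‖U - Ut + Ut * P * E0 + E0 * P * Ut‖
        ≤ ‖U - Ut + Ut * P * E0‖ + ‖E0 * P * Ut‖ := norm_add_le _ _
    have hs3 : ‖U - Ut + Ut * P * E0‖ ≤ ‖U - Ut‖ + ‖Ut * P * E0‖ := norm_add_le _ _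
    have hrev : ‖U - Ut‖ = ‖Ut - U‖ := norm_sub_rev _ _
    linarith
  have hb3 : ‖C * P * E1‖ ≤ ‖C * P‖ * ‖E1‖ := Matrix.frobenius_norm_mul _ _
  have hb4 : ‖E2 * (P * (Rm + E1))‖ ≤ ‖P * (Rm + E1)‖ * ‖E2‖ := by
    calc ‖E2 * (P * (Rm + E1))‖ ≤ ‖E2‖ * ‖P * (Rm + E1)‖ := Matrix.frobenius_norm_mul _ _
      _ = ‖P * (Rm + E1)‖ * ‖E2‖ := mul_comm _ _
  have hfin : ‖Wp‖ * ‖Vp‖ * ‖Y‖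
      ≤ ‖Wp‖ * ‖Vp‖ * (2 * ‖E0‖ + ‖Ut - U‖ + ‖P‖ * ‖E0‖ ^ 2) :=
    mul_le_mul_of_nonneg_left hbY (mul_nonneg (norm_nonneg _) (norm_nonneg _))
  linarith

end CURMain
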